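/- If a finite-dimensional Λ-module M has a filtration governed by a semisimple sequence S' = (S'_0,...,S'_L), then S' ≤ S(M) in the dominance order, where S(M) is the radical layering of M. -/

import Mathlib

section AlgFramework

variable (K Λ : Type*) [Field K] [Ring Λ] [Algebra K Λ]

/-- The quotient of the submodule `p` by (its intersection with) the submodule `q`. -/
abbrev subQuot (R M : Type*) [Ring R] [AddCommGroup M] [Module R M]
    (p q : Submodule R M) : Type _ :=
  ↥p ⧸ Submodule.comap p.subtype q

/-- Scalar multiplication by `a : Λ`, as a `K`-linear endomap. -/
def eComp (a : Λ) (N : Type*) [AddCommGroup N] [Module K N] [Module Λ N]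
    [IsScalarTower K Λ N] : N →ₗ[K] N where
  toFun m := a • m
  map_add' := smul_add a
  map_smul' k m := smul_comm a k m

/-- `dimAt a N = dim_K (a • N)`; for an idempotent `a = e_i` this is the `i`-th entry of the
dimension vector of `N`. -/
noncomputable def dimAt (a : Λ) (N : Type*) [AddCommGroup N] [Module K N] [Module Λ N]
    [IsScalarTower K Λ N] : ℕ :=
  Module.finrank K ↥(LinearMap.range (eComp K Λ a N))

/-- `J • N`, for an ideal `J` and a submodule `N` of a `Λ`-module `M`. -/
def smulSub (J : Ideal Λ) {M : Type*} [AddCommGroup M] [Module Λ M] (N : Submodule Λ M) :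
    Submodule Λ M :=
  Submodule.span Λ {m : M | ∃ a ∈ J, ∃ x ∈ N, m = a • x}

/-- The radical series `radM J M l = J^l M` of the module `M`. -/
def radM (J : Ideal Λ) (M : Type*) [AddCommGroup M] [Module Λ M] : ℕ → Submodule Λ M
  | 0 => ⊤
  | l + 1 => smulSub Λ J (radM J M l)

end AlgFramework

section Aux
variable (K Λ : Type*) [Field K] [Ring Λ] [Algebra K Λ]

instance auxFinDimSub {M : Type*} [AddCommGroup M] [Module Λ M] [Module K M]
    [IsScalarTower K Λ M] [FiniteDimensional K M] (p : Submodule Λ M) :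
    FiniteDimensional K ↥p :=
  FiniteDimensional.of_injective ((p.subtype).restrictScalars K) p.injective_subtype

variable {N N' : Type*}
  [AddCommGroup N] [Module Λ N] [Module K N] [IsScalarTower K Λ N]
  [AddCommGroup N'] [Module Λ N'] [Module K N'] [IsScalarTower K Λ N']

lemma eComp_apply (a : Λ) (m : N) : eComp K Λ a N m = a • m := rfl

lemma dimAt_le_of_injective (a : Λ) (g : N →ₗ[Λ] N') (hg : Function.Injective g)
    [FiniteDimensional K N'] : dimAt K Λ a N ≤ dimAt K Λ a N' := by
  classical
  set gK : N →ₗ[K] N' := g.restrictScalars K with hgK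
  have hmap : (LinearMap.range (eComp K Λ a N)).map gK ≤ LinearMap.range (eComp K Λ a N') := by
    rintro x ⟨y, ⟨n, rfl⟩, rfl⟩
    exact ⟨g n, by simp [eComp_apply, gK, map_smul]⟩
  have : Module.finrank K ↥(LinearMap.range (eComp K Λ a N)) =
      Module.finrank K ↥((LinearMap.range (eComp K Λ a N)).map gK) :=
    (Submodule.equivMapOfInjective gK hg _).finrank_eq
  rw [dimAt, this]
  exact Submodule.finrank_mono hmap

lemma dimAt_eq_of_equiv (a : Λ) (g : N ≃ₗ[Λ] N') : dimAt K Λ a N = dimAt K Λ a N' := by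
  classical
  set gK : N →ₗ[K] N' := (g : N →ₗ[Λ] N').restrictScalars K with hgK
  have hmap : (LinearMap.range (eComp K Λ a N)).map gK = LinearMap.range (eComp K Λ a N') := by
    apply le_antisymm
    · rintro x ⟨y, ⟨n, rfl⟩, rfl⟩
      exact ⟨g n, by simp [eComp_apply, gK, map_smul]⟩
    · rintro x ⟨n', rfl⟩
      exact ⟨a • g.symm n', ⟨g.symm n', rfl⟩, by simp [eComp_apply, gK, map_smul]⟩
  have : Module.finrank K ↥(LinearMap.range (eComp K Λ a N)) =
      Module.finrank K ↥((LinearMap.range (eComp K Λ a N)).map gK) :=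
    (Submodule.equivMapOfInjective gK (by simpa [gK] using g.injective) _).finrank_eq
  rw [dimAt, this, hmap]; rfl

lemma dimAt_eq_add_of_surjective (a : Λ) (ha : IsIdempotentElem a)
    (f : N →ₗ[Λ] N') (hf : Function.Surjective f) [FiniteDimensional K N] :
    dimAt K Λ a N = dimAt K Λ a ↥(LinearMap.ker f) + dimAt K Λ a N' := by
  classical
  set fK : N →ₗ[K] N' := f.restrictScalars K with hfK
  set E := eComp K Λ a N
  set E' := eComp K Λ a N'
  have hres : ∀ x ∈ LinearMap.range E, fK x ∈ LinearMap.range E' := by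
    rintro x ⟨n, rfl⟩
    exact ⟨f n, by simp [E, E', eComp_apply, fK, map_smul]⟩
  set g : ↥(LinearMap.range E) →ₗ[K] ↥(LinearMap.range E') := fK.restrict hres with hg
  have hgsurj : Function.Surjective g := by
    rintro ⟨y, n', rfl⟩
    obtain ⟨n, rfl⟩ := hf n'
    refine ⟨⟨E n, ⟨n, rfl⟩⟩, ?_⟩
    ext
    simp [g, LinearMap.restrict_apply, E, E', fK, eComp_apply, map_smul]
  have hrn : Module.finrank K ↥(LinearMap.range g) + Module.finrank K ↥(LinearMap.ker g)
      = Module.finrank K ↥(LinearMap.range E) := LinearMap.finrank_range_add_finrank_ker g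
  have hr : Module.finrank K ↥(LinearMap.range g) = dimAt K Λ a N' := by
    rw [LinearMap.range_eq_top.mpr hgsurj]
    exact (Submodule.topEquiv (R := K) (M := ↥(LinearMap.range E'))).finrank_eq
  set P := LinearMap.ker f
  set ι : ↥P →ₗ[K] N := (P.subtype).restrictScalars K with hι
  have hker : (LinearMap.ker g).map (LinearMap.range E).subtype
      = (LinearMap.range (eComp K Λ a ↥P)).map ι := by
    apply le_antisymm
    · rintro x ⟨⟨y, hy⟩, hyk, rfl⟩
      have hy0 : fK y = 0 := by
        have := congrArg Subtype.val (show g ⟨y, hy⟩ = 0 from hyk)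
        simpa [g, LinearMap.restrict_apply] using this
      have hyP : y ∈ P := by simpa [P, fK] using hy0
      have hyfix : a • y = y := by
        obtain ⟨n, rfl⟩ := hy
        simp only [E, eComp_apply, ← smul_smul]
        rw [smul_smul, ha]
      exact ⟨(eComp K Λ a ↥P) ⟨y, hyP⟩, ⟨⟨y, hyP⟩, rfl⟩, by
        simp [ι, eComp_apply]
        exact hyfix⟩
    · rintro x ⟨z, ⟨p, rfl⟩, rfl⟩
      have hmem : (ι ((eComp K Λ a ↥P) p)) ∈ LinearMap.range E :=
        ⟨(p : N), by simp [ι, E, eComp_apply]⟩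
      refine ⟨⟨ι ((eComp K Λ a ↥P) p), hmem⟩, ?_, rfl⟩
      have : fK (ι ((eComp K Λ a ↥P) p)) = 0 := by
        have hp : f (p : N) = 0 := p.2
        simp [ι, fK, eComp_apply, map_smul, hp]
      ext
      simp [g, LinearMap.restrict_apply, this]
  have hk : Module.finrank K ↥(LinearMap.ker g) = dimAt K Λ a ↥P := by
    have h1 : Module.finrank K ↥(LinearMap.ker g)
        = Module.finrank K ↥((LinearMap.ker g).map (LinearMap.range E).subtype) :=
      (Submodule.equivMapOfInjective _ (Submodule.injective_subtype _) _).finrank_eq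
    have h2 : Module.finrank K ↥(LinearMap.range (eComp K Λ a ↥P))
        = Module.finrank K ↥((LinearMap.range (eComp K Λ a ↥P)).map ι) :=
      (Submodule.equivMapOfInjective ι (P.injective_subtype) _).finrank_eq
    rw [h1, hker, dimAt, h2]
  rw [dimAt, ← hrn, hr, hk]
  ring

variable {M : Type*} [AddCommGroup M] [Module Λ M] [Module K M] [IsScalarTower K Λ M]
  [FiniteDimensional K M]

/-- For submodules `C ≤ A`, `dim eA = dim eC + dim e(A/C)`. -/
lemma dimAt_sub_add (a : Λ) (ha : IsIdempotentElem a) {A C : Submodule Λ M} (hCA : C ≤ A) :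
    dimAt K Λ a ↥A = dimAt K Λ a ↥C + dimAt K Λ a (subQuot Λ M A C) := by
  have h := dimAt_eq_add_of_surjective K Λ a ha (Submodule.comap A.subtype C).mkQ
    (Submodule.mkQ_surjective _)
  rw [Submodule.ker_mkQ] at h
  rw [h, dimAt_eq_of_equiv K Λ a (Submodule.comapSubtypeEquivOfLe hCA)]

/-- Telescoping: for a decreasing chain `G`, the partial sums of layer dimensions. -/
lemma dimAt_telescope (a : Λ) (ha : IsIdempotentElem a) (G : ℕ → Submodule Λ M)
    (hmono : ∀ n, G (n + 1) ≤ G n) (l : ℕ) :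
    (∑ j ∈ Finset.range (l + 1), dimAt K Λ a (subQuot Λ M (G j) (G (j + 1))))
      + dimAt K Λ a ↥(G (l + 1)) = dimAt K Λ a ↥(G 0) := by
  induction l with
  | zero =>
      rw [Finset.sum_range_one, dimAt_sub_add K Λ a ha (hmono 0)]
      omega
  | succ n ih =>
      rw [Finset.sum_range_succ]
      have h := dimAt_sub_add K Λ a ha (hmono (n + 1))
      omega

lemma sum_Iic_fin {n : ℕ} (l : Fin (n + 1)) (f : Fin (n + 1) → ℕ) (g : ℕ → ℕ)
    (hfg : ∀ (j : ℕ) (hj : j < n + 1), f ⟨j, hj⟩ = g j) :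
    ∑ j ∈ Finset.Iic l, f j = ∑ j ∈ Finset.range ((l : ℕ) + 1), g j := by
  refine Finset.sum_nbij' (fun j => (j : ℕ))
    (fun j => (⟨j % (n + 1), Nat.mod_lt _ (Nat.succ_pos n)⟩ : Fin (n + 1))) ?_ ?_ ?_ ?_ ?_
  · intro j hj
    simp only [Finset.mem_Iic, Fin.le_def] at hj
    simpa [Nat.lt_succ_iff] using hj
  · intro j hj
    simp only [Finset.mem_range, Nat.lt_succ_iff] at hj
    have hjn : j < n + 1 := lt_of_le_of_lt hj l.isLt
    simp [Finset.mem_Iic, Fin.le_def, Nat.mod_eq_of_lt hjn, hj]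
  · intro j hj
    exact Fin.ext (by simp [Nat.mod_eq_of_lt j.isLt])
  · intro j hj
    simp only [Finset.mem_range, Nat.lt_succ_iff] at hj
    have hjn : j < n + 1 := lt_of_le_of_lt hj l.isLt
    simp [Nat.mod_eq_of_lt hjn]
  · intro j hj
    simpa [Fin.eta] using hfg (j : ℕ) j.isLt

end Aux

section Aux2
variable {Λ : Type*} [Ring Λ] {M : Type*} [AddCommGroup M] [Module Λ M]

lemma smulSub_mono (J : Ideal Λ) {A B : Submodule Λ M} (h : A ≤ B) :
    smulSub Λ J A ≤ smulSub Λ J B := by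
  apply Submodule.span_mono
  rintro m ⟨b, hb, x, hx, rfl⟩
  exact ⟨b, hb, x, h hx, rfl⟩

lemma smulSub_le (J : Ideal Λ) (A : Submodule Λ M) : smulSub Λ J A ≤ A := by
  rw [smulSub, Submodule.span_le]
  rintro m ⟨b, _, x, hx, rfl⟩
  exact A.smul_mem b hx

lemma radM_antitone (J : Ideal Λ) (n : ℕ) : radM Λ J M (n + 1) ≤ radM Λ J M n := by
  induction n with
  | zero => exact le_top
  | succ m ih => exact smulSub_mono J ih

end Aux2

set_option maxHeartbeats 1000000 in
/-- If a finite-dimensional `Λ`-module `M` has a filtration governed by a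
semisimple sequence `S' = (S'_0, …, S'_L)`, then `S' ≤ S(M)` in the dominance order, where
`S(M)` is the radical layering of `M`.  Dimension vectors are recorded at a family of
idempotents `e i` of `Λ`: the dominance order compares, componentwise at each `e i`, the
`K`-dimensions of the partial direct sums `⊕_{j ≤ l} S'_j` resp. `⊕_{j ≤ l} J^j M / J^(j+1) M`. -/
theorem governed_filtration_dominance
    (K Λ : Type*) [Field K] [Ring Λ] [Algebra K Λ] [FiniteDimensional K Λ]
    (L : ℕ) (J : Ideal Λ)
    (hJac : J = sInf {P : Ideal Λ | P.IsMaximal})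
    (hnil : radM Λ J Λ (L + 1) = ⊥)
    (nn : ℕ) (e : Fin nn → Λ) (hidem : ∀ i, IsIdempotentElem (e i))
    (M : Type*) [AddCommGroup M] [Module Λ M] [Module K M] [IsScalarTower K Λ M]
    [FiniteDimensional K M]
    (S' : Fin (L + 1) → Type*) [∀ l, AddCommGroup (S' l)] [∀ l, Module Λ (S' l)]
    [∀ l, Module K (S' l)] [∀ l, IsScalarTower K Λ (S' l)] [∀ l, FiniteDimensional K (S' l)]
    [∀ l, IsSemisimpleModule Λ (S' l)]
    (F : Fin (L + 2) → Submodule Λ M)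
    (hF0 : F 0 = ⊤) (hFlast : F (Fin.last (L + 1)) = ⊥)
    (hmono : ∀ l : Fin (L + 1), F l.succ ≤ F l.castSucc)
    (hgov : ∀ l : Fin (L + 1), smulSub Λ J (F l.castSucc) ≤ F l.succ)
    (hiso : ∀ l : Fin (L + 1),
      Nonempty (subQuot Λ M (F l.castSucc) (F l.succ) ≃ₗ[Λ] S' l)) :
    ∀ (l : Fin (L + 1)) (i : Fin nn),
      ∑ j ∈ Finset.Iic l, dimAt K Λ (e i) (S' j) ≤
        ∑ j ∈ Finset.Iic l,
          dimAt K Λ (e i) (subQuot Λ M (radM Λ J M (j : ℕ)) (radM Λ J M ((j : ℕ) + 1))) := by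
  classical
  intro l i
  set a := e i with hadef
  have ha := hidem i
  set Gf : ℕ → Submodule Λ M := fun n => if h : n < L + 2 then F ⟨n, h⟩ else ⊥ with hGf
  set Gr : ℕ → Submodule Λ M := fun n => radM Λ J M n with hGr
  have hGfmono : ∀ n, Gf (n + 1) ≤ Gf n := by
    intro n
    by_cases h : n + 1 < L + 2
    · have h' : n < L + 2 := by omega
      have e1 : Gf (n + 1) = F ((⟨n, by omega⟩ : Fin (L + 1)).succ) := dif_pos h
      have e2 : Gf n = F ((⟨n, by omega⟩ : Fin (L + 1)).castSucc) := dif_pos h'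
      rw [e1, e2]
      exact hmono ⟨n, by omega⟩
    · have e1 : Gf (n + 1) = ⊥ := dif_neg h
      rw [e1]; exact bot_le
  have hGrmono : ∀ n, Gr (n + 1) ≤ Gr n := fun n => radM_antitone J n
  have hrad_le : ∀ n, ∀ h : n < L + 2, radM Λ J M n ≤ F ⟨n, h⟩ := by
    intro n
    induction n with
    | zero =>
        intro h
        rw [show (⟨0, h⟩ : Fin (L + 2)) = 0 from rfl, hF0]
        exact le_top
    | succ m ih =>
        intro h
        have hm : m < L + 2 := by omega
        calc radM Λ J M (m + 1) = smulSub Λ J (radM Λ J M m) := rfl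
          _ ≤ smulSub Λ J (F ⟨m, hm⟩) := smulSub_mono J (ih hm)
          _ ≤ F ((⟨m, by omega⟩ : Fin (L + 1)).succ) := hgov ⟨m, by omega⟩
  have t1 := dimAt_telescope K Λ a ha Gf hGfmono (l : ℕ)
  have t2 := dimAt_telescope K Λ a ha Gr hGrmono (l : ℕ)
  have hL : ∑ j ∈ Finset.Iic l, dimAt K Λ a (S' j)
      = ∑ j ∈ Finset.range ((l : ℕ) + 1), dimAt K Λ a (subQuot Λ M (Gf j) (Gf (j + 1))) := by
    apply sum_Iic_fin
    intro j hj
    have e1 : Gf j = F ((⟨j, hj⟩ : Fin (L + 1)).castSucc) := dif_pos (by omega)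
    have e2 : Gf (j + 1) = F ((⟨j, hj⟩ : Fin (L + 1)).succ) := dif_pos (by omega)
    rw [e1, e2]
    exact (dimAt_eq_of_equiv K Λ a (hiso ⟨j, hj⟩).some).symm
  have hR : ∑ j ∈ Finset.Iic l,
        dimAt K Λ a (subQuot Λ M (radM Λ J M (j : ℕ)) (radM Λ J M ((j : ℕ) + 1)))
      = ∑ j ∈ Finset.range ((l : ℕ) + 1), dimAt K Λ a (subQuot Λ M (Gr j) (Gr (j + 1))) := by
    apply sum_Iic_fin
    intro j hj
    rfl
  have h0 : dimAt K Λ a ↥(Gf 0) = dimAt K Λ a ↥(Gr 0) := by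
    have hfe : Gf 0 = Gr 0 := by
      have e1 : Gf 0 = F 0 := dif_pos (by omega)
      rw [e1, hF0]
      rfl
    rw [hfe]
  have hle : dimAt K Λ a ↥(Gr ((l : ℕ) + 1)) ≤ dimAt K Λ a ↥(Gf ((l : ℕ) + 1)) := by
    have hlt : (l : ℕ) + 1 < L + 2 := by have := l.isLt; omega
    have hsub : Gr ((l : ℕ) + 1) ≤ Gf ((l : ℕ) + 1) := by
      have e1 : Gf ((l : ℕ) + 1) = F ⟨(l : ℕ) + 1, hlt⟩ := dif_pos hlt
      rw [e1]
      exact hrad_le _ hlt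
    exact dimAt_le_of_injective K Λ a (Submodule.inclusion hsub)
      (Submodule.inclusion_injective hsub)
  rw [hL, hR]
  omega
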